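/- arXiv:2003.11594 — 3 statements merged into one kernel-verified Lean document; each statement's English description precedes it below -/
import Mathlib

section
/- For every α ∈ Q((1/T)) that is not a rational function, there exist infinitely many pairs of polynomials p, q ∈ Q[T], q ≠ 0, with deg(α - p/q) ≤ -2 deg q - 1. -/
noncomputable section
open scoped Classical

/-- `ℚ((1/T))`: formal Laurent series in `X = 1/T` over `ℚ`. The exponent `n` of `X`
corresponds to `T^(-n)`. -/
abbrev QLaurent := LaurentSeries ℚ

/-- The embedding of `ℚ[T]` into `ℚ((1/T))`, sending `T` to `X⁻¹ = single (-1) 1`. -/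
noncomputable def polyToL : Polynomial ℚ →ₐ[ℚ] QLaurent :=
  Polynomial.aeval (HahnSeries.single (-1 : ℤ) (1 : ℚ))

/-- The embedding of the rational functions `ℚ(T)` into `ℚ((1/T))`. -/
noncomputable def ratToL (r : RatFunc ℚ) : QLaurent := polyToL r.num / polyToL r.denom

/-- The degree (in `T`) of a formal Laurent series in `1/T`, with `deg 0 = ⊥`. -/
noncomputable def degL (α : QLaurent) : WithBot ℤ :=
  if α = 0 then ⊥ else ((-α.order : ℤ) : WithBot ℤ)

/-- Integer-valued degree in `T` (junk value `0` at `α = 0`). -/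
noncomputable def degZ (α : QLaurent) : ℤ := -α.order

open scoped nonZeroDivisors

lemma amap (a : ℚ) : algebraMap ℚ QLaurent a = HahnSeries.C a := by
  rw [HahnSeries.algebraMap_apply', PowerSeries.algebraMap_apply, Algebra.algebraMap_self,
    RingHom.id_apply, HahnSeries.ofPowerSeries_C]

lemma polyToL_monomial (i : ℕ) (a : ℚ) :
    polyToL (Polynomial.monomial i a) = HahnSeries.single (-(i : ℤ)) a := by
  simp only [polyToL, Polynomial.aeval_monomial, amap, HahnSeries.C_apply,
    HahnSeries.single_pow, one_pow, HahnSeries.single_mul_single, zero_add, one_mul,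
    smul_eq_mul, nsmul_eq_mul, mul_neg, mul_one]

lemma polyToL_coeff (p : Polynomial ℚ) (n : ℤ) :
    (polyToL p).coeff n = if n ≤ 0 then p.coeff (-n).toNat else 0 := by
  induction p using Polynomial.induction_on' with
  | add f g hf hg =>
      simp only [map_add, HahnSeries.coeff_add, hf, hg, Polynomial.coeff_add]
      split <;> simp
  | monomial i a =>
      rw [polyToL_monomial, HahnSeries.coeff_single]
      by_cases h : n = -(i : ℤ)
      · subst h; simp [Polynomial.coeff_monomial]
      · rw [if_neg h]
        rcases le_or_gt n 0 with h0 | h0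
        · rw [if_pos h0, Polynomial.coeff_monomial, if_neg (by omega)]
        · rw [if_neg (by omega)]

lemma polyToL_injective : Function.Injective polyToL := by
  intro p q h
  ext i
  have := congrArg (fun x => HahnSeries.coeff x (-(i : ℤ))) h
  simpa [polyToL_coeff] using this

lemma polyToL_ne_zero {q : Polynomial ℚ} (hq : q ≠ 0) : polyToL q ≠ 0 := by
  intro h
  exact hq (polyToL_injective (by simpa using h))

lemma polyToL_order {q : Polynomial ℚ} (hq : q ≠ 0) :
    (polyToL q).order = -(q.natDegree : ℤ) := by
  have hne := polyToL_ne_zero hq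
  have hcoeff : (polyToL q).coeff (-(q.natDegree : ℤ)) ≠ 0 := by
    rw [polyToL_coeff, if_pos (by omega)]
    simpa using Polynomial.leadingCoeff_ne_zero.mpr hq
  refine le_antisymm (HahnSeries.order_le_of_coeff_ne_zero hcoeff) ?_
  by_contra hlt
  push_neg at hlt
  have h2 : (polyToL q).coeff (polyToL q).order ≠ 0 := HahnSeries.coeff_order_eq_zero.not.2 hne
  rw [polyToL_coeff] at h2
  rcases le_or_gt (polyToL q).order 0 with h0 | h0
  · rw [if_pos h0] at h2
    exact h2 (Polynomial.coeff_eq_zero_of_natDegree_lt (by omega))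
  · rw [if_neg (by omega)] at h2; exact h2 rfl

lemma mem_range_ratToL (p q : Polynomial ℚ) (hq : q ≠ 0) :
    polyToL p / polyToL q ∈ Set.range ratToL := by
  have hφ : (Polynomial ℚ)⁰ ≤ (QLaurent)⁰.comap polyToL :=
    nonZeroDivisors_le_comap_nonZeroDivisors_of_injective _ polyToL_injective
  have key : ∀ r : RatFunc ℚ, ratToL r = RatFunc.liftAlgHom polyToL hφ r := by
    intro r
    conv_rhs => rw [← RatFunc.num_div_denom r]
    rw [RatFunc.liftAlgHom_apply_div]
    rfl
  refine ⟨algebraMap _ _ p / algebraMap _ _ q, ?_⟩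
  rw [key, RatFunc.liftAlgHom_apply_div]

lemma exists_good_q (α : QLaurent) (n : ℕ) :
    ∃ q : Polynomial ℚ, q ≠ 0 ∧ q.natDegree ≤ n ∧
      ∀ k : ℤ, 1 ≤ k → k ≤ n → (polyToL q * α).coeff k = 0 := by
  set g : (Fin (n + 1) → ℚ) →ₗ[ℚ] (Fin n → ℚ) :=
    { toFun := fun c k =>
        (polyToL (∑ i : Fin (n + 1), Polynomial.monomial (i : ℕ) (c i)) * α).coeff ((k : ℤ) + 1)
      map_add' := by
        intro c d
        funext k
        simp [Finset.sum_add_distrib, add_mul, HahnSeries.coeff_add]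
      map_smul' := by
        intro m c
        funext k
        have hsum : (∑ x : Fin (n + 1), Polynomial.monomial (x : ℕ) ((m • c) x))
            = Polynomial.C m * ∑ x : Fin (n + 1), Polynomial.monomial (x : ℕ) (c x) := by
          rw [Finset.mul_sum]
          exact Finset.sum_congr rfl fun x _ => by
            simp [Polynomial.C_mul_monomial]
        show (polyToL (∑ x : Fin (n + 1), Polynomial.monomial (x : ℕ) ((m • c) x)) * α).coeff
            ((k : ℤ) + 1) = _
        have hCm : polyToL (Polynomial.C m) = HahnSeries.C m := by
          rw [show (Polynomial.C m : Polynomial ℚ) = algebraMap ℚ (Polynomial ℚ) m from rfl,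
            AlgHom.commutes, amap]
        rw [hsum, map_mul, hCm, mul_assoc, HahnSeries.C_mul_eq_smul, HahnSeries.coeff_smul]
        simp } with hg
  have hnotinj : ¬ Function.Injective g := by
    intro hinj
    have := LinearMap.finrank_le_finrank_of_injective hinj
    simp [Module.finrank_pi] at this
  rw [Function.not_injective_iff] at hnotinj
  obtain ⟨c, d, hcd, hne⟩ := hnotinj
  set e : Fin (n + 1) → ℚ := c - d with he
  have he0 : e ≠ 0 := sub_ne_zero.mpr hne
  have hge : g e = 0 := by rw [he, map_sub, hcd, sub_self]
  set q : Polynomial ℚ := ∑ i : Fin (n + 1), Polynomial.monomial (i : ℕ) (e i) with hqdef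
  have hqcoeff : ∀ m : ℕ, q.coeff m = if h : m < n + 1 then e ⟨m, h⟩ else 0 := by
    intro m
    rw [hqdef, Polynomial.finset_sum_coeff]
    split
    · next h =>
        rw [Finset.sum_eq_single (⟨m, h⟩ : Fin (n + 1))]
        · simp
        · intro j _ hj
          rw [Polynomial.coeff_monomial, if_neg]
          intro hjm
          exact hj (Fin.ext hjm)
        · simp
    · next h =>
        apply Finset.sum_eq_zero
        intro j _
        rw [Polynomial.coeff_monomial, if_neg]
        exact fun hjm => h (hjm ▸ j.isLt)
  refine ⟨q, ?_, ?_, ?_⟩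
  · intro hq0
    apply he0
    funext i
    have := hqcoeff i
    rw [hq0, Polynomial.coeff_zero, dif_pos i.isLt] at this
    simpa using this.symm
  · rw [Polynomial.natDegree_le_iff_coeff_eq_zero]
    intro m hm
    rw [hqcoeff m, dif_neg (by omega)]
  · intro k hk1 hkn
    have hk' : (k - 1).toNat < n := by omega
    have := congrFun hge ⟨(k - 1).toNat, hk'⟩
    simp only [hg, LinearMap.coe_mk, AddHom.coe_mk, Pi.zero_apply] at this
    rw [← hqdef] at this
    convert this using 3
    push_cast
    omega

theorem main_step (α : QLaurent) (hirr : α ∉ Set.range ratToL) (n : ℕ) :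
    ∃ pr : Polynomial ℚ × Polynomial ℚ, pr.2 ≠ 0 ∧
      degL (α - polyToL pr.1 / polyToL pr.2)
        ≤ ((-2 * (pr.2.natDegree : ℤ) - 1 : ℤ) : WithBot ℤ) ∧
      ((n : ℤ) + 1 : ℤ) ≤ (α - polyToL pr.1 / polyToL pr.2).order := by
  obtain ⟨q, hq0, hqdeg, hker⟩ := exists_good_q α n
  have hα : α ≠ 0 := by
    intro h
    exact hirr ⟨0, by simp [ratToL, h]⟩
  have hqL : polyToL q ≠ 0 := polyToL_ne_zero hq0
  set β : QLaurent := polyToL q * α with hβ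
  have hβ0 : β ≠ 0 := mul_ne_zero hqL hα
  set N : ℕ := (1 - β.order).toNat with hN
  set p : Polynomial ℚ := ∑ i ∈ Finset.range N, Polynomial.monomial i (β.coeff (-(i : ℤ)))
    with hp
  have hpcoeff : ∀ i : ℕ, p.coeff i = if i < N then β.coeff (-(i : ℤ)) else 0 := by
    intro i
    rw [hp, Polynomial.finset_sum_coeff]
    rw [Finset.sum_congr rfl (fun j _ => Polynomial.coeff_monomial)]
    simp [Finset.sum_ite_eq, Finset.mem_range]
  have hsub : ∀ k : ℤ, k ≤ (n : ℤ) → (β - polyToL p).coeff k = 0 := by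
    intro k hk
    rw [HahnSeries.coeff_sub, polyToL_coeff]
    rcases le_or_gt k 0 with h0 | h0
    · rw [if_pos h0, hpcoeff]
      have hkk : -((-k).toNat : ℤ) = k := by omega
      by_cases hiN : (-k).toNat < N
      · rw [if_pos hiN, hkk, sub_self]
      · rw [if_neg hiN, sub_zero]
        apply HahnSeries.coeff_eq_zero_of_lt_order
        have : (1 - β.order) ≤ (N : ℤ) := Int.self_le_toNat _
        omega
    · rw [if_neg (by omega), sub_zero]
      exact hker k (by omega) hk
  refine ⟨(p, q), hq0, ?_⟩
  set γ : QLaurent := α - polyToL p / polyToL q with hγ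
  have hγq : γ * polyToL q = β - polyToL p := by
    rw [hγ, sub_mul, div_mul_cancel₀ _ hqL, hβ, mul_comm]
  have hγ0 : γ ≠ 0 := by
    intro h
    rw [hγ, sub_eq_zero] at h
    exact hirr (h ▸ mem_range_ratToL p q hq0)
  have hβp0 : β - polyToL p ≠ 0 := by
    rw [← hγq]; exact mul_ne_zero hγ0 hqL
  have horder : (n : ℤ) + 1 ≤ (β - polyToL p).order := by
    by_contra hlt
    push_neg at hlt
    exact HahnSeries.coeff_order_eq_zero.not.2 hβp0 (hsub _ (by omega))
  have hmul : γ.order + (polyToL q).order = (β - polyToL p).order := by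
    rw [← HahnSeries.order_mul hγ0 hqL, hγq]
  rw [polyToL_order hq0] at hmul
  have hγord : (n : ℤ) + 1 + (q.natDegree : ℤ) ≤ γ.order := by omega
  have hdegq : (q.natDegree : ℤ) ≤ (n : ℤ) := by exact_mod_cast hqdeg
  constructor
  · show degL γ ≤ _
    rw [degL, if_neg hγ0]
    exact_mod_cast (WithBot.coe_le_coe.mpr (by omega : -γ.order ≤ -2 * (q.natDegree : ℤ) - 1))
  · show _ ≤ γ.order
    omega

/-- Dirichlet's theorem for `ℚ((1/T))`: for every `α ∈ ℚ((1/T))` which is not a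
rational function there are infinitely many pairs of polynomials `(p, q)`,
`q ≠ 0`, with `deg (α - p/q) ≤ -2 deg q - 1`. -/
theorem dirichlet_approximation (α : QLaurent) (hirr : α ∉ Set.range ratToL) :
    {pr : Polynomial ℚ × Polynomial ℚ | pr.2 ≠ 0 ∧
      degL (α - polyToL pr.1 / polyToL pr.2)
        ≤ ((-2 * (pr.2.natDegree : ℤ) - 1 : ℤ) : WithBot ℤ)}.Infinite := by
  set S := {pr : Polynomial ℚ × Polynomial ℚ | pr.2 ≠ 0 ∧
      degL (α - polyToL pr.1 / polyToL pr.2)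
        ≤ ((-2 * (pr.2.natDegree : ℤ) - 1 : ℤ) : WithBot ℤ)} with hS
  intro hfin
  have hord : ((fun pr : Polynomial ℚ × Polynomial ℚ =>
      (α - polyToL pr.1 / polyToL pr.2).order) '' S).Finite := hfin.image _
  obtain ⟨b, hb⟩ := hord.bddAbove
  obtain ⟨pr, h1, h2, h3⟩ := main_step α hirr b.toNat
  have hmem : pr ∈ S := ⟨h1, h2⟩
  have : (α - polyToL pr.1 / polyToL pr.2).order ≤ b := hb ⟨pr, hmem, rfl⟩
  omega


end
end

section
/- For α ∈ Q((1/T)) \ Q(T) with continued fraction [a_0, a_1, ...], the Lagrange constant l(α) — the greatest integer k such that deg(α - p/q) ≤ -2 deg q - k holds for infinitely many p/q ∈ Q(T) — equals limsup_{h→∞} deg a_h. -/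
noncomputable section
open scoped Classical

/-- The polynomial part `⌊α⌋` of `α ∈ ℚ((1/T))`: truncation to the terms of
nonnegative degree in `T` (nonpositive exponent of `X = 1/T`). -/
noncomputable def polyPart (α : QLaurent) : QLaurent where
  coeff n := if n ≤ 0 then α.coeff n else 0
  isPWO_support' := α.isPWO_support'.mono (by
    intro n hn
    simp only [Function.mem_support, ne_eq] at hn ⊢
    intro h
    apply hn
    split_ifs <;> simp [h])

/-- The fractional part `{α} = α - ⌊α⌋`. -/
noncomputable def fracPart (α : QLaurent) : QLaurent := α - polyPart α

/-- The complete quotients `α_n` of the continued fraction algorithm: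
`α_0 = α`, `α_{n+1} = 1/{α_n}`. -/
noncomputable def cfA (α : QLaurent) : ℕ → QLaurent
  | 0 => α
  | n + 1 => (fracPart (cfA α n))⁻¹

/-- The partial quotients `a_n = ⌊α_n⌋` of the continued fraction of `α`. -/
noncomputable def pq (α : QLaurent) (n : ℕ) : QLaurent := polyPart (cfA α n)

namespace CFAux

/-! ### Order and degree basics -/

lemma order_eq_of {x : QLaurent} {d : ℤ} (h1 : x.coeff d ≠ 0)
    (h2 : ∀ n < d, x.coeff n = 0) : x.order = d := by
  have hx : x ≠ 0 := fun h => h1 (by simp [h])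
  have h3 := HahnSeries.order_le_of_coeff_ne_zero h1
  rcases lt_or_eq_of_le h3 with h | h
  · exact absurd (h2 _ h) ((mt HahnSeries.coeff_order_eq_zero.mp hx))
  · exact h

lemma degZ_mul {x y : QLaurent} (hx : x ≠ 0) (hy : y ≠ 0) :
    degZ (x * y) = degZ x + degZ y := by
  simp [degZ, HahnSeries.order_mul hx hy]; ring

lemma degZ_one : degZ (1 : QLaurent) = 0 := by simp [degZ, HahnSeries.order_one]

lemma degZ_inv {x : QLaurent} (hx : x ≠ 0) : degZ x⁻¹ = -degZ x := by
  have hinv : x⁻¹ ≠ 0 := inv_ne_zero hx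
  have := degZ_mul hx hinv
  rw [mul_inv_cancel₀ hx, degZ_one] at this
  linarith

lemma degZ_div {x y : QLaurent} (hx : x ≠ 0) (hy : y ≠ 0) :
    degZ (x / y) = degZ x - degZ y := by
  rw [div_eq_mul_inv, degZ_mul hx (inv_ne_zero hy), degZ_inv hy]; ring

lemma order_add_eq {x y : QLaurent} (hx : x ≠ 0) (h : x.order < y.order) :
    x + y ≠ 0 ∧ (x + y).order = x.order := by
  have hc : (x + y).coeff x.order ≠ 0 := by
    rw [HahnSeries.coeff_add, HahnSeries.coeff_eq_zero_of_lt_order h, add_zero]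
    exact (mt HahnSeries.coeff_order_eq_zero.mp hx)
  refine ⟨fun h0 => hc (by simp [h0]), order_eq_of hc ?_⟩
  intro n hn
  rw [HahnSeries.coeff_add, HahnSeries.coeff_eq_zero_of_lt_order hn,
    HahnSeries.coeff_eq_zero_of_lt_order (hn.trans h), add_zero]

lemma order_lt_of_degZ_lt {x y : QLaurent} (hy : y ≠ 0) (h : degZ y < degZ x) :
    x.order < y.order := by simp [degZ] at h; omega

/-- Ultrametric: if `deg y < deg x` then `deg (x+y) = deg x` and `x+y ≠ 0`. -/
lemma degZ_add_eq {x y : QLaurent} (hx : x ≠ 0) (hy : y ≠ 0) (h : degZ y < degZ x) :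
    x + y ≠ 0 ∧ degZ (x + y) = degZ x := by
  obtain ⟨h1, h2⟩ := order_add_eq hx (order_lt_of_degZ_lt hy h)
  exact ⟨h1, by simp [degZ, h2]⟩


/-! ### polyToL -/

lemma algebraMap_eq_single (c : ℚ) :
    (algebraMap ℚ QLaurent) c = HahnSeries.single (0 : ℤ) c := by
  show ((HahnSeries.ofPowerSeries ℤ ℚ) (algebraMap ℚ (PowerSeries ℚ) c)) = _
  rw [show algebraMap ℚ (PowerSeries ℚ) c = PowerSeries.C c from rfl,
    HahnSeries.ofPowerSeries_C, HahnSeries.C_apply]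

lemma polyToL_monomial (i : ℕ) (c : ℚ) :
    polyToL (Polynomial.monomial i c) = HahnSeries.single (-(i : ℤ)) c := by
  have hpow : (HahnSeries.single (-1 : ℤ) (1 : ℚ)) ^ i = HahnSeries.single (-(i : ℤ)) 1 := by
    induction i with
    | zero => simp [HahnSeries.single_zero_one]
    | succ n ih =>
      rw [pow_succ, ih, HahnSeries.single_mul_single, mul_one]
      congr 1
      push_cast
      ring
  rw [← Polynomial.C_mul_X_pow_eq_monomial, polyToL, map_mul, map_pow, Polynomial.aeval_X,
    Polynomial.aeval_C, algebraMap_eq_single, hpow, HahnSeries.single_mul_single, zero_add,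
    mul_one]

lemma polyToL_coeff_neg (p : Polynomial ℚ) (i : ℕ) :
    (polyToL p).coeff (-(i : ℤ)) = p.coeff i := by
  induction p using Polynomial.induction_on' with
  | add f g hf hg => simp [map_add, HahnSeries.coeff_add, hf, hg]
  | monomial n c =>
    rw [polyToL_monomial, HahnSeries.coeff_single, Polynomial.coeff_monomial]
    split_ifs with h1 h2 h2 <;> first | rfl | (exfalso; omega)

lemma polyToL_coeff_pos (p : Polynomial ℚ) (n : ℤ) (hn : 0 < n) :
    (polyToL p).coeff n = 0 := by
  induction p using Polynomial.induction_on' with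
  | add f g hf hg => simp [map_add, HahnSeries.coeff_add, hf, hg]
  | monomial m c =>
    rw [polyToL_monomial, HahnSeries.coeff_single, if_neg (by omega)]

lemma polyToL_ne_zero {p : Polynomial ℚ} (hp : p ≠ 0) : polyToL p ≠ 0 := by
  intro h
  apply Polynomial.leadingCoeff_ne_zero.mpr hp
  have := polyToL_coeff_neg p p.natDegree
  rw [h, HahnSeries.coeff_zero] at this
  rw [Polynomial.leadingCoeff, ← this]

lemma polyToL_order {p : Polynomial ℚ} (hp : p ≠ 0) :
    (polyToL p).order = -(p.natDegree : ℤ) := by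
  apply order_eq_of
  · rw [polyToL_coeff_neg]
    exact Polynomial.leadingCoeff_ne_zero.mpr hp
  · intro n hn
    rcases le_or_gt n 0 with h | h
    · obtain ⟨i, rfl⟩ : ∃ i : ℕ, n = -(i : ℤ) := ⟨(-n).toNat, by omega⟩
      rw [polyToL_coeff_neg]
      exact Polynomial.coeff_eq_zero_of_natDegree_lt (by omega)
    · exact polyToL_coeff_pos p n h

lemma degZ_polyToL {p : Polynomial ℚ} (hp : p ≠ 0) :
    degZ (polyToL p) = p.natDegree := by simp [degZ, polyToL_order hp]

/-! ### polyPart, fracPart, toPoly -/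

lemma polyPart_coeff (x : QLaurent) (n : ℤ) :
    (polyPart x).coeff n = if n ≤ 0 then x.coeff n else 0 := rfl

lemma fracPart_coeff (x : QLaurent) (n : ℤ) :
    (fracPart x).coeff n = if n ≤ 0 then 0 else x.coeff n := by
  rw [fracPart, HahnSeries.coeff_sub, polyPart_coeff]
  split_ifs <;> simp

lemma fracPart_order {x : QLaurent} (hx : fracPart x ≠ 0) : 1 ≤ (fracPart x).order := by
  by_contra h
  apply (mt HahnSeries.coeff_order_eq_zero.mp hx)
  rw [fracPart_coeff, if_pos (by omega)]

noncomputable def toPoly (x : QLaurent) : Polynomial ℚ :=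
  ∑ i ∈ Finset.range (1 - x.order).toNat, Polynomial.monomial i (x.coeff (-(i : ℤ)))

lemma polyToL_toPoly (x : QLaurent) : polyToL (toPoly x) = polyPart x := by
  ext n
  rw [toPoly, map_sum]
  have hsum : (∑ i ∈ Finset.range (1 - x.order).toNat,
      polyToL (Polynomial.monomial i (x.coeff (-(i : ℤ))))).coeff n
      = ∑ i ∈ Finset.range (1 - x.order).toNat,
        (polyToL (Polynomial.monomial i (x.coeff (-(i : ℤ))))).coeff n :=
    map_sum (HahnSeries.coeff.addMonoidHom n) _ _
  rw [polyPart_coeff]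
  have hterm : ∀ i ∈ Finset.range (1 - x.order).toNat,
      (polyToL (Polynomial.monomial i (x.coeff (-(i : ℤ))))).coeff n
        = if n = -(i : ℤ) then x.coeff (-(i : ℤ)) else 0 := by
    intro i _
    rw [polyToL_monomial, HahnSeries.coeff_single]
    split_ifs <;> rfl
  rw [hsum, Finset.sum_congr rfl hterm]
  rcases le_or_gt n 0 with h | h
  · rw [if_pos h]
    by_cases hmem : (-n).toNat ∈ Finset.range (1 - x.order).toNat
    · rw [Finset.sum_eq_single_of_mem ((-n).toNat) hmem]
      · rw [if_pos (by omega)]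
        congr 1
        omega
      · intro b _ hb
        rw [if_neg (by omega)]
    · have : ∀ i ∈ Finset.range (1 - x.order).toNat,
          (if n = -(i : ℤ) then x.coeff (-(i : ℤ)) else 0) = 0 := by
        intro i hi
        simp only [Finset.mem_range] at hi hmem
        rw [if_neg (by omega)]
      rw [Finset.sum_eq_zero this]
      simp only [Finset.mem_range] at hmem
      exact (HahnSeries.coeff_eq_zero_of_lt_order (by omega)).symm
  · rw [if_neg (by omega), Finset.sum_eq_zero]
    intro i _
    rw [if_neg (by omega)]

/-! ### The rational subfield -/

lemma polyToL_injective : Function.Injective polyToL := by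
  intro a b h
  by_contra hne
  exact polyToL_ne_zero (sub_ne_zero.mpr hne) (by rw [map_sub, h, sub_self])

noncomputable def lift' : RatFunc ℚ →+* QLaurent :=
  IsFractionRing.lift (g := polyToL.toRingHom) polyToL_injective

lemma lift'_algebraMap (p : Polynomial ℚ) :
    lift' (algebraMap (Polynomial ℚ) (RatFunc ℚ) p) = polyToL p :=
  IsFractionRing.lift_algebraMap _ _

lemma ratToL_eq_lift (r : RatFunc ℚ) : ratToL r = lift' r := by
  rw [ratToL, ← lift'_algebraMap, ← lift'_algebraMap, ← map_div₀, RatFunc.num_div_denom]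

lemma ratToL_injective : Function.Injective ratToL := by
  have : Function.Injective lift' := lift'.injective
  intro a b h
  apply this
  rw [← ratToL_eq_lift, ← ratToL_eq_lift, h]

lemma range_eq : Set.range ratToL = Set.range lift' := by
  ext x
  constructor <;> rintro ⟨r, rfl⟩ <;> exact ⟨r, by rw [ratToL_eq_lift]⟩

lemma polyToL_mem (p : Polynomial ℚ) : polyToL p ∈ Set.range ratToL := by
  rw [range_eq]
  exact ⟨algebraMap _ _ p, lift'_algebraMap p⟩

lemma mem_add {x y : QLaurent} (hx : x ∈ Set.range ratToL) (hy : y ∈ Set.range ratToL) :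
    x + y ∈ Set.range ratToL := by
  rw [range_eq] at *
  obtain ⟨r, rfl⟩ := hx; obtain ⟨s, rfl⟩ := hy
  exact ⟨r + s, map_add _ _ _⟩

lemma mem_inv {x : QLaurent} (hx : x ∈ Set.range ratToL) : x⁻¹ ∈ Set.range ratToL := by
  rw [range_eq] at *
  obtain ⟨r, rfl⟩ := hx
  exact ⟨r⁻¹, map_inv₀ _ _⟩

/-! ### Continued fraction basics -/

lemma polyPart_of_neg_order {x : QLaurent} (hx : x ≠ 0) (h : x.order < 0) :
    polyPart x ≠ 0 ∧ (polyPart x).order = x.order := by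
  have hc : (polyPart x).coeff x.order ≠ 0 := by
    rw [polyPart_coeff, if_pos (by omega)]
    exact (mt HahnSeries.coeff_order_eq_zero.mp hx)
  refine ⟨fun h0 => hc (by simp [h0]), order_eq_of hc ?_⟩
  intro n hn
  rw [polyPart_coeff]
  split_ifs
  · exact HahnSeries.coeff_eq_zero_of_lt_order hn
  · rfl

section CF
variable (α : QLaurent) (hirr : α ∉ Set.range ratToL)

lemma rat_step (n : ℕ) : cfA α n ∈ Set.range ratToL → α ∈ Set.range ratToL := by
  induction n with
  | zero => exact id
  | succ m ih =>
    intro hmem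
    apply ih
    have h1 : fracPart (cfA α m) ∈ Set.range ratToL := by
      have := mem_inv hmem
      rwa [cfA, inv_inv] at this
    have h2 : polyPart (cfA α m) ∈ Set.range ratToL := by
      rw [← polyToL_toPoly]; exact polyToL_mem _
    have : fracPart (cfA α m) + polyPart (cfA α m) = cfA α m := by
      rw [fracPart]; ring
    rw [← this]
    exact mem_add h1 h2

include hirr in
lemma frac_ne (n : ℕ) : fracPart (cfA α n) ≠ 0 := by
  intro h
  apply hirr
  apply rat_step α n
  have : cfA α n = polyPart (cfA α n) := by
    have := sub_eq_zero.mp h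
    exact this
  rw [this, ← polyToL_toPoly]
  exact polyToL_mem _

include hirr in
lemma beta_ne (n : ℕ) : cfA α (n + 1) ≠ 0 := by
  rw [cfA]
  exact inv_ne_zero (frac_ne α hirr n)

lemma cf_rec (n : ℕ) : cfA α n = pq α n + (cfA α (n + 1))⁻¹ := by
  rw [show cfA α (n+1) = (fracPart (cfA α n))⁻¹ from rfl, inv_inv, pq, fracPart]
  ring

include hirr in
lemma beta_deg (n : ℕ) : 1 ≤ degZ (cfA α (n + 1)) := by
  rw [show cfA α (n+1) = (fracPart (cfA α n))⁻¹ from rfl, degZ_inv (frac_ne α hirr n)]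
  have := fracPart_order (frac_ne α hirr n)
  simp [degZ]; omega

include hirr in
lemma pq_facts (n : ℕ) : pq α (n + 1) ≠ 0 ∧ degZ (pq α (n + 1)) = degZ (cfA α (n + 1)) := by
  have h1 := beta_ne α hirr n
  have h2 := beta_deg α hirr n
  have h3 : (cfA α (n+1)).order < 0 := by simp [degZ] at h2; omega
  obtain ⟨ha, hb⟩ := polyPart_of_neg_order h1 h3
  exact ⟨ha, by simp [pq, degZ, hb]⟩

/-! ### Convergents -/

noncomputable def Ap (n : ℕ) : Polynomial ℚ := toPoly (cfA α n)

lemma polyToL_Ap (n : ℕ) : polyToL (Ap α n) = pq α n := by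
  rw [Ap, polyToL_toPoly, pq]

noncomputable def Pc : ℕ → Polynomial ℚ
  | 0 => 1
  | 1 => Ap α 0
  | n + 2 => Ap α (n + 1) * Pc (n + 1) + Pc n

noncomputable def Qc : ℕ → Polynomial ℚ
  | 0 => 0
  | 1 => 1
  | n + 2 => Ap α (n + 1) * Qc (n + 1) + Qc n

lemma det_eq (n : ℕ) :
    Pc α (n + 1) * Qc α n - Pc α n * Qc α (n + 1) = (-1) ^ (n + 1) := by
  induction n with
  | zero => simp [Pc, Qc]
  | succ m ih =>
    rw [show Pc α (m + 2) = Ap α (m + 1) * Pc α (m + 1) + Pc α m from rfl,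
      show Qc α (m + 2) = Ap α (m + 1) * Qc α (m + 1) + Qc α m from rfl, pow_succ]
    linear_combination (-1 : Polynomial ℚ) * ih

lemma coprime_PQ (n : ℕ) : IsCoprime (Pc α (n + 1)) (Qc α (n + 1)) := by
  refine ⟨(-1) ^ (n + 1) * Qc α n, -((-1) ^ (n + 1) * Pc α n), ?_⟩
  have := det_eq α n
  have h2 : ((-1 : Polynomial ℚ) ^ (n + 1)) * ((-1 : Polynomial ℚ) ^ (n + 1)) = 1 := by
    rw [← pow_add, ← two_mul, pow_mul]
    norm_num
  linear_combination ((-1 : Polynomial ℚ) ^ (n + 1)) * this + h2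

noncomputable def Pv (n : ℕ) : QLaurent := polyToL (Pc α n)
noncomputable def Qv (n : ℕ) : QLaurent := polyToL (Qc α n)

include hirr in
lemma iden (n : ℕ) :
    α * (Qv α (n + 1) * cfA α (n + 1) + Qv α n) = Pv α (n + 1) * cfA α (n + 1) + Pv α n := by
  induction n with
  | zero =>
    have h0 : α = pq α 0 + (cfA α 1)⁻¹ := cf_rec α 0
    have hb : cfA α 1 ≠ 0 := beta_ne α hirr 0
    rw [show Qv α 1 = 1 by simp [Qv, Qc], show Qv α 0 = 0 by simp [Qv, Qc],
      show Pv α 1 = pq α 0 by rw [Pv, show Pc α 1 = Ap α 0 from rfl, polyToL_Ap],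
      show Pv α 0 = 1 by simp [Pv, Pc]]
    field_simp at h0 ⊢
    linear_combination h0
  | succ m ih =>
    have hb1 : cfA α (m + 1) ≠ 0 := beta_ne α hirr m
    have hb2 : cfA α (m + 2) ≠ 0 := beta_ne α hirr (m + 1)
    have hrec : cfA α (m + 1) = pq α (m + 1) + (cfA α (m + 2))⁻¹ := cf_rec α (m + 1)
    have hP : Pv α (m + 2) = polyToL (Ap α (m + 1)) * Pv α (m + 1) + Pv α m := by
      rw [Pv, show Pc α (m + 2) = Ap α (m + 1) * Pc α (m + 1) + Pc α m from rfl]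
      simp [map_add, map_mul, Pv]
    have hQ : Qv α (m + 2) = polyToL (Ap α (m + 1)) * Qv α (m + 1) + Qv α m := by
      rw [Qv, show Qc α (m + 2) = Ap α (m + 1) * Qc α (m + 1) + Qc α m from rfl]
      simp [map_add, map_mul, Qv]
    rw [polyToL_Ap] at hP hQ
    have ih2 := congrArg (fun z => z * cfA α (m + 2)) ih
    have hcan : (cfA α (m + 2))⁻¹ * cfA α (m + 2) = 1 := inv_mul_cancel₀ hb2
    rw [hrec] at ih2
    rw [hP, hQ]
    linear_combination ih2 - (α * Qv α (m + 1) - Pv α (m + 1)) * hcan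

noncomputable def θ (n : ℕ) : QLaurent := α * Qv α n - Pv α n

include hirr in
lemma theta_rec (n : ℕ) : θ α (n + 1) * cfA α (n + 1) = -θ α n := by
  have := iden α hirr n
  rw [θ, θ]
  linear_combination this

/-! ### Degrees of convergents -/

noncomputable def dq (n : ℕ) : ℤ := degZ (pq α n)

noncomputable def Ssum (n : ℕ) : ℤ := ∑ m ∈ Finset.range n, dq α (m + 1)

lemma Ssum_succ (n : ℕ) : Ssum α (n + 1) = Ssum α n + dq α (n + 1) := by
  rw [Ssum, Finset.sum_range_succ, Ssum]

include hirr in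
lemma dq_ge (n : ℕ) : 1 ≤ dq α (n + 1) := by
  rw [dq, (pq_facts α hirr n).2]
  exact beta_deg α hirr n

include hirr in
lemma Ssum_mono {m n : ℕ} (h : m < n) : Ssum α m < Ssum α n := by
  have key : ∀ j : ℕ, Ssum α m < Ssum α (m + 1 + j) := by
    intro j
    induction j with
    | zero => have := dq_ge α hirr m; rw [Ssum_succ]; omega
    | succ i ih =>
      have := dq_ge α hirr (m + 1 + i)
      have h2 := Ssum_succ α (m + 1 + i)
      have h3 : m + 1 + (i + 1) = (m + 1 + i) + 1 := by omega
      rw [h3, h2]; omega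
  have := key (n - m - 1)
  have h4 : m + 1 + (n - m - 1) = n := by omega
  rwa [h4] at this

include hirr in
lemma Ssum_ge (n : ℕ) : (n : ℤ) ≤ Ssum α n := by
  induction n with
  | zero => simp [Ssum]
  | succ m ih =>
    have := dq_ge α hirr m
    rw [Ssum_succ]
    push_cast
    omega

lemma degZ_neg (x : QLaurent) : degZ (-x) = degZ x := by
  simp [degZ, HahnSeries.order_neg]

include hirr in
lemma Qv_facts (n : ℕ) : Qv α (n + 1) ≠ 0 ∧ degZ (Qv α (n + 1)) = Ssum α n := by
  induction n using Nat.strong_induction_on with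
  | _ n ih =>
    match n with
    | 0 =>
      constructor
      · rw [Qv, show Qc α 1 = 1 from rfl, map_one]; exact one_ne_zero
      · rw [Qv, show Qc α 1 = 1 from rfl, map_one, degZ_one, Ssum]; simp
    | 1 =>
      have hQ2 : Qv α 2 = pq α 1 := by
        rw [Qv, show Qc α 2 = Ap α 1 * Qc α 1 + Qc α 0 from rfl,
          show Qc α 1 = 1 from rfl, show Qc α 0 = 0 from rfl]
        rw [map_add, map_mul, map_one, map_zero, mul_one, add_zero, polyToL_Ap]
      refine ⟨by rw [hQ2]; exact (pq_facts α hirr 0).1, ?_⟩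
      rw [hQ2, Ssum, Finset.sum_range_one]
      rfl
    | (m + 2) =>
      obtain ⟨h1ne, h1deg⟩ := ih (m + 1) (by omega)
      obtain ⟨h0ne, h0deg⟩ := ih m (by omega)
      have hQrec : Qv α (m + 3) = pq α (m + 2) * Qv α (m + 2) + Qv α (m + 1) := by
        rw [Qv, show Qc α (m + 3) = Ap α (m + 2) * Qc α (m + 2) + Qc α (m + 1) from rfl,
          map_add, map_mul, polyToL_Ap]
        rfl
      have hpqne := (pq_facts α hirr (m + 1)).1
      have hu : pq α (m + 2) * Qv α (m + 2) ≠ 0 := mul_ne_zero hpqne h1ne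
      have hudeg : degZ (pq α (m + 2) * Qv α (m + 2)) = dq α (m + 2) + Ssum α (m + 1) := by
        rw [degZ_mul hpqne h1ne, h1deg, dq]
      have hlt : degZ (Qv α (m + 1)) < degZ (pq α (m + 2) * Qv α (m + 2)) := by
        rw [h0deg, hudeg]
        have h5 := Ssum_mono α hirr (show m < m + 1 by omega)
        have hd : (1 : ℤ) ≤ dq α (m + 2) := dq_ge α hirr (m + 1)
        omega
      obtain ⟨hne, hdeg⟩ := degZ_add_eq hu h0ne hlt
      rw [hQrec]
      refine ⟨hne, ?_⟩
      rw [hdeg, hudeg, Ssum_succ α (m + 1)]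
      ring

include hirr in
lemma theta_facts (n : ℕ) : θ α n ≠ 0 ∧ degZ (θ α n) = -(Ssum α n) := by
  induction n with
  | zero =>
    have h0 : θ α 0 = -1 := by
      rw [θ, Qv, Pv, show Qc α 0 = 0 from rfl, show Pc α 0 = 1 from rfl, map_zero, map_one]
      ring
    rw [h0]
    refine ⟨by simp, ?_⟩
    rw [degZ_neg, degZ_one, Ssum]
    simp
  | succ m ih =>
    obtain ⟨hne, hdeg⟩ := ih
    have hrec := theta_rec α hirr m
    have hbne : cfA α (m + 1) ≠ 0 := beta_ne α hirr m
    have hθne : θ α (m + 1) ≠ 0 := by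
      intro h0
      rw [h0, zero_mul] at hrec
      exact hne (neg_eq_zero.mp hrec.symm)
    constructor
    · exact hθne
    · have hdm := congrArg degZ hrec
      rw [degZ_mul hθne hbne, degZ_neg, hdeg] at hdm
      have hbdeg : degZ (cfA α (m + 1)) = dq α (m + 1) := by
        rw [dq, (pq_facts α hirr m).2]
      rw [hbdeg] at hdm
      rw [Ssum_succ]
      omega

/-! ### Best approximation -/

include hirr in
lemma bestapprox (p q : Polynomial ℚ) (hq : q ≠ 0)
    (h : degZ (α * polyToL q - polyToL p) < -degZ (polyToL q)) :
    ∃ n, polyToL p * Qv α (n + 1) = polyToL q * Pv α (n + 1) := by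
  have hLqne : polyToL q ≠ 0 := polyToL_ne_zero hq
  have hDq0 : 0 ≤ degZ (polyToL q) := by rw [degZ_polyToL hq]; positivity
  have hex : ∃ m : ℕ, degZ (polyToL q) < Ssum α (m + 1) := by
    refine ⟨(degZ (polyToL q)).toNat, ?_⟩
    have := Ssum_ge α hirr ((degZ (polyToL q)).toNat + 1)
    push_cast at this
    omega
  set n := Nat.find hex with hn
  have hn2 : degZ (polyToL q) < Ssum α (n + 1) := Nat.find_spec hex
  have hn1 : Ssum α n ≤ degZ (polyToL q) := by
    rcases Nat.eq_zero_or_pos n with h0 | h0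
    · rw [h0]
      simpa [Ssum] using hDq0
    · have hmin := Nat.find_min hex (m := n - 1) (by omega)
      push_neg at hmin
      have heq : n - 1 + 1 = n := by omega
      rwa [heq] at hmin
  set ε : Polynomial ℚ := (-1) ^ (n + 2) with hε
  have hdet : Pc α (n + 2) * Qc α (n + 1) - Pc α (n + 1) * Qc α (n + 2) = ε := det_eq α (n + 1)
  have hee : ε * ε = 1 := by
    rw [hε, ← pow_add, ← two_mul, pow_mul]
    norm_num
  obtain ⟨x, y, hp, hq2⟩ : ∃ x y : Polynomial ℚ,
      p = x * Pc α (n + 1) + y * Pc α (n + 2) ∧ q = x * Qc α (n + 1) + y * Qc α (n + 2) := by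
    refine ⟨ε * (q * Pc α (n + 2) - p * Qc α (n + 2)),
      ε * (p * Qc α (n + 1) - q * Pc α (n + 1)), ?_, ?_⟩
    · linear_combination (-(ε * p)) * hdet - p * hee
    · linear_combination (-(ε * q)) * hdet - q * hee
  by_cases hy : y = 0
  · refine ⟨n, ?_⟩
    have hpoly : p * Qc α (n + 1) = q * Pc α (n + 1) := by
      linear_combination Qc α (n + 1) * hp - Pc α (n + 1) * hq2 + y * hdet + ε * hy
    have := congrArg polyToL hpoly
    rw [map_mul, map_mul] at this
    exact this
  exfalso
  have hLy : polyToL y ≠ 0 := polyToL_ne_zero hy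
  have hLydeg : 0 ≤ degZ (polyToL y) := by rw [degZ_polyToL hy]; positivity
  have hKq : polyToL q = polyToL x * Qv α (n + 1) + polyToL y * Qv α (n + 2) := by
    have := congrArg polyToL hq2
    rwa [map_add, map_mul, map_mul] at this
  have hKp : polyToL p = polyToL x * Pv α (n + 1) + polyToL y * Pv α (n + 2) := by
    have := congrArg polyToL hp
    rwa [map_add, map_mul, map_mul] at this
  obtain ⟨hQ1ne, hQ1deg⟩ := Qv_facts α hirr n
  obtain ⟨hQ2ne, hQ2deg⟩ := Qv_facts α hirr (n + 1)
  have hwne : polyToL y * Qv α (n + 2) ≠ 0 := mul_ne_zero hLy hQ2ne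
  have hwdeg : degZ (polyToL y * Qv α (n + 2)) = degZ (polyToL y) + Ssum α (n + 1) := by
    rw [degZ_mul hLy hQ2ne, hQ2deg]
  by_cases hx : x = 0
  · rw [hx, map_zero, zero_mul, zero_add] at hKq
    rw [hKq] at hn2
    omega
  have hLx : polyToL x ≠ 0 := polyToL_ne_zero hx
  have hLxdeg : 0 ≤ degZ (polyToL x) := by rw [degZ_polyToL hx]; positivity
  have hune : polyToL x * Qv α (n + 1) ≠ 0 := mul_ne_zero hLx hQ1ne
  have hudeg : degZ (polyToL x * Qv α (n + 1)) = degZ (polyToL x) + Ssum α n := by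
    rw [degZ_mul hLx hQ1ne, hQ1deg]
  rcases lt_or_ge (degZ (polyToL x * Qv α (n + 1))) (degZ (polyToL y * Qv α (n + 2))) with hc | hc
  · obtain ⟨hne, hdeg⟩ := degZ_add_eq hwne hune hc
    rw [add_comm] at hdeg
    rw [hKq, hdeg] at hn2
    omega
  · -- degZ (x Q₁) ≥ degZ (y Q₂)
    have hxbig : degZ (polyToL y) + Ssum α (n + 1) ≤ degZ (polyToL x) + Ssum α n := by
      rw [← hudeg, ← hwdeg]; exact hc
    obtain ⟨hθ1ne, hθ1deg⟩ := theta_facts α hirr (n + 1)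
    obtain ⟨hθ2ne, hθ2deg⟩ := theta_facts α hirr (n + 2)
    have hu'ne : polyToL x * θ α (n + 1) ≠ 0 := mul_ne_zero hLx hθ1ne
    have hw'ne : polyToL y * θ α (n + 2) ≠ 0 := mul_ne_zero hLy hθ2ne
    have hu'deg : degZ (polyToL x * θ α (n + 1)) = degZ (polyToL x) - Ssum α (n + 1) := by
      rw [degZ_mul hLx hθ1ne, hθ1deg]; ring
    have hw'deg : degZ (polyToL y * θ α (n + 2)) = degZ (polyToL y) - Ssum α (n + 2) := by
      rw [degZ_mul hLy hθ2ne, hθ2deg]; ring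
    have hSS : Ssum α n < Ssum α (n + 2) := Ssum_mono α hirr (by omega)
    have hSS2 : Ssum α n < Ssum α (n + 1) := Ssum_mono α hirr (by omega)
    have hlt : degZ (polyToL y * θ α (n + 2)) < degZ (polyToL x * θ α (n + 1)) := by
      rw [hu'deg, hw'deg]; omega
    obtain ⟨hne, hdeg⟩ := degZ_add_eq hu'ne hw'ne hlt
    have hdecomp : α * polyToL q - polyToL p
        = polyToL x * θ α (n + 1) + polyToL y * θ α (n + 2) := by
      rw [hKq, hKp, θ, θ]
      ring
    rw [hdecomp, hdeg, hu'deg] at h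
    omega

/-! ### Convergents as rational functions -/

noncomputable def rc (n : ℕ) : RatFunc ℚ :=
  algebraMap (Polynomial ℚ) (RatFunc ℚ) (Pc α (n + 1)) /
    algebraMap (Polynomial ℚ) (RatFunc ℚ) (Qc α (n + 1))

include hirr in
lemma Qc_ne (n : ℕ) : Qc α (n + 1) ≠ 0 := by
  intro h
  apply (Qv_facts α hirr n).1
  rw [Qv, h, map_zero]

include hirr in
lemma ratToL_rc (n : ℕ) : ratToL (rc α n) = Pv α (n + 1) / Qv α (n + 1) := by
  rw [ratToL_eq_lift, rc, map_div₀, lift'_algebraMap, lift'_algebraMap, Pv, Qv]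

include hirr in
lemma rc_denom (n : ℕ) : ((rc α n).denom.natDegree : ℤ) = Ssum α n := by
  have hQne := Qc_ne α hirr n
  have hdvd1 : (rc α n).denom ∣ Qc α (n + 1) := RatFunc.denom_div_dvd _ _
  have hdvd2 : Qc α (n + 1) ∣ (rc α n).denom := by
    have hnum := RatFunc.num_div_denom (rc α n)
    have heq : algebraMap (Polynomial ℚ) (RatFunc ℚ) (rc α n).num /
        algebraMap (Polynomial ℚ) (RatFunc ℚ) (rc α n).denom
        = algebraMap (Polynomial ℚ) (RatFunc ℚ) (Pc α (n + 1)) /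
          algebraMap (Polynomial ℚ) (RatFunc ℚ) (Qc α (n + 1)) := hnum.trans rfl
    rw [div_eq_div_iff (RatFunc.algebraMap_ne_zero (rc α n).denom_ne_zero)
      (RatFunc.algebraMap_ne_zero hQne)] at heq
    have hcross : (rc α n).num * Qc α (n + 1) = Pc α (n + 1) * (rc α n).denom := by
      apply IsFractionRing.injective (Polynomial ℚ) (RatFunc ℚ)
      rw [map_mul, map_mul]
      exact heq
    apply (coprime_PQ α n).symm.dvd_of_dvd_mul_left (z := (rc α n).denom)
    exact ⟨(rc α n).num, by linear_combination -hcross⟩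
  have h1 := Polynomial.natDegree_le_of_dvd hdvd1 hQne
  have h2 := Polynomial.natDegree_le_of_dvd hdvd2 (rc α n).denom_ne_zero
  have h3 : (Qc α (n + 1)).natDegree = (rc α n).denom.natDegree := by omega
  have h4 : degZ (Qv α (n + 1)) = Ssum α n := (Qv_facts α hirr n).2
  rw [Qv, degZ_polyToL hQne] at h4
  rw [← h4, h3]

include hirr in
lemma rc_diff (n : ℕ) : α - ratToL (rc α n) ≠ 0 ∧
    degZ (α - ratToL (rc α n)) = -2 * Ssum α n - dq α (n + 1) := by
  obtain ⟨hQne, hQdeg⟩ := Qv_facts α hirr n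
  obtain ⟨hθne, hθdeg⟩ := theta_facts α hirr (n + 1)
  have hdiff : α - ratToL (rc α n) = θ α (n + 1) / Qv α (n + 1) := by
    rw [ratToL_rc α hirr n, θ]
    field_simp
  have hne : α - ratToL (rc α n) ≠ 0 := by
    rw [hdiff]
    exact div_ne_zero hθne hQne
  refine ⟨hne, ?_⟩
  rw [hdiff, degZ_div hθne hQne, hθdeg, hQdeg, Ssum_succ]
  ring

include hirr in
lemma rc_injective : Function.Injective (rc α) := by
  intro m n h
  by_contra hne
  have : Ssum α m = Ssum α n := by
    have := rc_denom α hirr m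
    rw [h] at this
    rw [← this, rc_denom α hirr n]
  rcases Nat.lt_or_ge m n with hlt | hge
  · exact absurd this (ne_of_lt (Ssum_mono α hirr hlt))
  · have : n < m := by omega
    exact absurd (Ssum_mono α hirr this) (by omega)

end CF

lemma degL_le_iff {z : QLaurent} (hz : z ≠ 0) (c : ℤ) :
    degL z ≤ (c : WithBot ℤ) ↔ degZ z ≤ c := by
  rw [degL, if_neg hz]
  exact WithBot.coe_le_coe

end CFAux

/-- For irrational `α ∈ ℚ((1/T))` (with bounded partial quotient degrees, so that
the Lagrange constant is finite), the greatest integer `k` such that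
`deg (α - p/q) ≤ -2 deg q - k` holds for infinitely many rational functions `p/q`
equals `limsup_{h → ∞} deg a_h`, where the `a_h` are the partial quotients of `α`. -/
theorem lagrange_constant_eq_limsup (α : QLaurent) (hirr : α ∉ Set.range ratToL)
    (hbdd : BddAbove (Set.range fun h : ℕ => degZ (pq α h))) :
    IsGreatest
      {k : ℤ | {r : RatFunc ℚ |
        degL (α - ratToL r) ≤ ((-2 * (r.denom.natDegree : ℤ) - k : ℤ) : WithBot ℤ)}.Infinite}
      (Filter.atTop.limsup fun h : ℕ => degZ (pq α h)) := by
  classical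
  set f : ℕ → ℤ := fun h : ℕ => degZ (pq α h) with hf
  set L : ℤ := Filter.atTop.limsup f with hL
  have hBound : Filter.IsBoundedUnder (· ≤ ·) Filter.atTop f := by
    obtain ⟨b, hb⟩ := hbdd
    exact Filter.isBoundedUnder_of ⟨b, fun n => hb ⟨n, rfl⟩⟩
  have hf1 : ∀ n : ℕ, 1 ≤ f (n + 1) := fun n => CFAux.dq_ge α hirr n
  have hCob : Filter.IsCoboundedUnder (· ≤ ·) Filter.atTop f := by
    apply Filter.isCoboundedUnder_le_of_eventually_le (l := Filter.atTop) (x := 1)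
    filter_upwards [Filter.eventually_ge_atTop 1] with n hn
    obtain ⟨m, rfl⟩ : ∃ m, n = m + 1 := ⟨n - 1, by omega⟩
    exact hf1 m
  have hL1 : 1 ≤ L := by
    apply Filter.le_limsup_of_frequently_le _ hBound
    apply Filter.Eventually.frequently
    filter_upwards [Filter.eventually_ge_atTop 1] with n hn
    obtain ⟨m, rfl⟩ : ∃ m, n = m + 1 := ⟨n - 1, by omega⟩
    exact hf1 m
  constructor
  · -- membership : L is achieved by infinitely many rationals (the convergents)
    have hfreq : ∃ᶠ n in Filter.atTop, L ≤ f n := by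
      by_contra hcon
      rw [Filter.not_frequently] at hcon
      have hev : ∀ᶠ n in Filter.atTop, f n ≤ L - 1 := by
        filter_upwards [hcon] with n hn
        push_neg at hn
        omega
      have := Filter.limsup_le_of_le hCob hev
      rw [← hL] at this
      omega
    have hTinf : {n : ℕ | L ≤ f (n + 1)}.Infinite := by
      intro hfin
      have hminf : {m : ℕ | L ≤ f m}.Infinite := Nat.frequently_atTop_iff_infinite.mp hfreq
      apply hminf
      apply ((hfin.image (fun n => n + 1)).insert 0).subset
      intro m hm
      rcases Nat.eq_zero_or_pos m with h0 | h0
      · simp [h0]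
      · right
        exact ⟨m - 1, by simpa [Nat.sub_add_cancel h0] using hm, by show m - 1 + 1 = m; omega⟩
    have himg : (CFAux.rc α '' {n : ℕ | L ≤ f (n + 1)}).Infinite :=
      hTinf.image ((CFAux.rc_injective α hirr).injOn)
    apply himg.mono
    rintro r ⟨n, hn, rfl⟩
    show degL (α - ratToL (CFAux.rc α n)) ≤ _
    obtain ⟨hne, hdeg⟩ := CFAux.rc_diff α hirr n
    rw [CFAux.degL_le_iff hne, hdeg, CFAux.rc_denom α hirr n]
    have hdq : L ≤ CFAux.dq α (n + 1) := hn
    omega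
  · -- upper bound
    rintro k hk
    by_contra hgt
    push_neg at hgt
    have hk1 : 1 ≤ k := by omega
    have hev : ∀ᶠ n in Filter.atTop, f n < k :=
      Filter.eventually_lt_of_limsup_lt (by rw [← hL]; omega) hBound
    obtain ⟨N, hN⟩ := Filter.eventually_atTop.mp hev
    have hfin : {n : ℕ | k ≤ f (n + 1)}.Finite := by
      apply (Set.finite_Iio N).subset
      intro n hn
      simp only [Set.mem_setOf_eq] at hn
      simp only [Set.mem_Iio]
      by_contra hge
      push_neg at hge
      have := hN (n + 1) (by omega)
      omega
    have hsub : {r : RatFunc ℚ | degL (α - ratToL r)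
          ≤ ((-2 * (r.denom.natDegree : ℤ) - k : ℤ) : WithBot ℤ)}
        ⊆ CFAux.rc α '' {n : ℕ | k ≤ f (n + 1)} := by
      intro r hr
      simp only [Set.mem_setOf_eq] at hr
      have hz : α - ratToL r ≠ 0 := by
        intro h0
        exact hirr ⟨r, (sub_eq_zero.mp h0).symm⟩
      rw [CFAux.degL_le_iff hz] at hr
      have hqne : r.denom ≠ 0 := r.denom_ne_zero
      have hLqne : polyToL r.denom ≠ 0 := CFAux.polyToL_ne_zero hqne
      have hLqdeg : degZ (polyToL r.denom) = r.denom.natDegree := CFAux.degZ_polyToL hqne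
      have hfact : α * polyToL r.denom - polyToL r.num = (α - ratToL r) * polyToL r.denom := by
        rw [ratToL, sub_mul, div_mul_cancel₀ _ hLqne]
      have hθdeg : degZ (α * polyToL r.denom - polyToL r.num) < -degZ (polyToL r.denom) := by
        rw [hfact, CFAux.degZ_mul hz hLqne, hLqdeg]
        omega
      obtain ⟨n, hbest⟩ := CFAux.bestapprox α hirr r.num r.denom hqne hθdeg
      have hreq : r = CFAux.rc α n := by
        apply CFAux.ratToL_injective
        rw [CFAux.ratToL_rc α hirr n, ratToL,
          div_eq_div_iff hLqne (CFAux.Qv_facts α hirr n).1]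
        exact hbest.trans (mul_comm _ _)
      refine ⟨n, ?_, hreq.symm⟩
      show k ≤ f (n + 1)
      obtain ⟨hne, hdeg⟩ := CFAux.rc_diff α hirr n
      rw [hreq] at hr
      rw [hdeg, CFAux.rc_denom α hirr n] at hr
      have : k ≤ CFAux.dq α (n + 1) := by omega
      exact this
    exact hk ((hfin.image _).subset hsub)

end
end

section
/- For each positive integer d and each integer l with 0 ≤ l < d, the Laurent series √(T^{2d} + T^l) ∈ Q((1/T)) has continued fraction expansion [T^d; 2T^{d-l}, 2T^d, 2T^{d-l}, 2T^d, ...], so its partial quotients a_h satisfy deg a_h = d for h even and deg a_h = d - l for h odd; consequently its Lagrange constant is d. -/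
noncomputable section
open scoped Classical

namespace SqrtCFAux

lemma cfA_succ (α : QLaurent) (n : ℕ) : cfA α (n + 1) = (fracPart (cfA α n))⁻¹ := rfl

lemma polyPart_coeff (x : QLaurent) (n : ℤ) :
    (polyPart x).coeff n = if n ≤ 0 then x.coeff n else 0 := rfl

lemma polyPart_split {P B : QLaurent} (hP : ∀ n : ℤ, 0 < n → P.coeff n = 0)
    (hB : ∀ n : ℤ, n ≤ 0 → B.coeff n = 0) :
    polyPart (P + B) = P := by
  ext n
  rw [polyPart_coeff]
  by_cases h : n ≤ 0
  · rw [if_pos h, HahnSeries.coeff_add, hB n h, add_zero]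
  · rw [if_neg h, (hP n (not_le.mp h)).symm]

lemma fracPart_split {P B : QLaurent} (hP : ∀ n : ℤ, 0 < n → P.coeff n = 0)
    (hB : ∀ n : ℤ, n ≤ 0 → B.coeff n = 0) :
    fracPart (P + B) = B := by
  rw [fracPart, polyPart_split hP hB]; ring

lemma two_eq_single : (2 : QLaurent) = HahnSeries.single (0:ℤ) (2:ℚ) := by
  have h := HahnSeries.single_zero_one (Γ := ℤ) (R := ℚ)
  rw [show (2:QLaurent) = 1 + 1 by norm_num, ← h]
  ext n
  simp [HahnSeries.coeff_single]
  split <;> norm_num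

lemma polyToL_X_pow (k : ℕ) : polyToL (Polynomial.X ^ k) = HahnSeries.single (-(k:ℤ)) (1:ℚ) := by
  rw [polyToL, map_pow, Polynomial.aeval_X, HahnSeries.single_pow]
  simp [nsmul_eq_mul]

lemma polyToL_two_X_pow (k : ℕ) :
    polyToL (2 * Polynomial.X ^ k) = HahnSeries.single (-(k:ℤ)) (2:ℚ) := by
  rw [map_mul, polyToL_X_pow, map_ofNat, two_eq_single, HahnSeries.single_mul_single]
  norm_num

lemma ne_zero_of_coeff {x : QLaurent} {n : ℤ} (h : x.coeff n ≠ 0) : x ≠ 0 := by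
  intro h0; rw [h0] at h; simp at h

lemma degZ_single {a : ℤ} {c : ℚ} (hc : c ≠ 0) : degZ (HahnSeries.single a c) = -a := by
  rw [degZ, HahnSeries.order_single hc]

end SqrtCFAux

open SqrtCFAux

/-- For `0 ≤ l < d`, the square root `α` of `T^{2d} + T^l` in `ℚ((1/T))` (with
leading term `T^d`) has continued fraction `[T^d; 2T^{d-l}, 2T^d, 2T^{d-l}, …]`;
its partial quotients `a_h` satisfy `deg a_h = d` for even `h` and
`deg a_h = d - l` for odd `h`, and its Lagrange constant
`limsup_h deg a_h` equals `d`. -/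
theorem sqrt_Tpow_cf (d l : ℕ) (hd : 0 < d) (hl : l < d) (α : QLaurent)
    (hsq : α ^ 2 = polyToL (Polynomial.X ^ (2 * d) + Polynomial.X ^ l))
    (hlead : α.coeff (-(d : ℤ)) = 1) :
    pq α 0 = polyToL (Polynomial.X ^ d) ∧
    (∀ n : ℕ, pq α (2 * n + 1) = polyToL (2 * Polynomial.X ^ (d - l)) ∧
      pq α (2 * n + 2) = polyToL (2 * Polynomial.X ^ d)) ∧
    (∀ h : ℕ, degZ (pq α h) = if Even h then (d : ℤ) else (d : ℤ) - (l : ℤ)) ∧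
    (Filter.atTop.limsup fun h : ℕ => degZ (pq α h)) = (d : ℤ) := by
  set A : QLaurent := HahnSeries.single (-(d:ℤ)) 1 with hA
  set β : QLaurent := α - A with hβdef
  have hαA : α = A + β := by rw [hβdef]; ring
  have hsqS : α ^ 2 = HahnSeries.single (-(2*(d:ℤ))) 1 + HahnSeries.single (-(l:ℤ)) 1 := by
    rw [hsq, map_add, polyToL_X_pow, polyToL_X_pow]
    push_cast
    ring_nf
  have hkey : β * (2*A + β) = HahnSeries.single (-(l:ℤ)) 1 := by
    have h2 : A * A = HahnSeries.single (-(2*(d:ℤ))) 1 := by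
      rw [hA, HahnSeries.single_mul_single]; norm_num; ring_nf
    have expand : β * (2*A+β) = α^2 - A*A := by rw [hβdef]; ring
    rw [expand, hsqS, h2]; ring
  have hαne : α ≠ 0 := ne_zero_of_coeff (by rw [hlead]; norm_num)
  have hordα : α.order = -(d:ℤ) := by
    have hle : α.order ≤ -(d:ℤ) :=
      HahnSeries.order_le_of_coeff_ne_zero (by rw [hlead]; norm_num)
    by_contra hne
    have hlt : α.order < -(d:ℤ) := lt_of_le_of_ne hle hne
    obtain ⟨o, ho⟩ : ∃ o, (α^2).order = o := ⟨_, rfl⟩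
    have h2 : o < -(2*(d:ℤ)) := by
      rw [← ho, HahnSeries.order_pow, two_nsmul]; omega
    have hco := mt HahnSeries.coeff_order_eq_zero.mp (pow_ne_zero 2 hαne)
    rw [ho, hsqS] at hco
    apply hco
    rw [HahnSeries.coeff_add, HahnSeries.coeff_single, HahnSeries.coeff_single,
      if_neg (by omega), if_neg (by omega)]
    norm_num
  have hAc : ∀ n : ℤ, n ≠ -(d:ℤ) → A.coeff n = 0 := by
    intro n hn; rw [hA, HahnSeries.coeff_single, if_neg hn]
  have hAcd : A.coeff (-(d:ℤ)) = 1 := by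
    rw [hA, HahnSeries.coeff_single, if_pos rfl]
  have hAα : (A + α).order = -(d:ℤ) := by
    have hcoeff : (A + α).coeff (-(d:ℤ)) = 2 := by
      rw [HahnSeries.coeff_add, hlead, hAcd]; norm_num
    have hne : A + α ≠ 0 := ne_zero_of_coeff (by rw [hcoeff]; norm_num)
    apply le_antisymm
    · exact HahnSeries.order_le_of_coeff_ne_zero (by rw [hcoeff]; norm_num)
    · by_contra h
      push_neg at h
      have hco := mt HahnSeries.coeff_order_eq_zero.mp hne
      apply hco
      rw [HahnSeries.coeff_add, hAc _ (by omega),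
        HahnSeries.coeff_eq_zero_of_lt_order (by omega : (A+α).order < α.order)]
      norm_num
  have h2Aβ : 2*A + β = A + α := by rw [hβdef]; ring
  have hβne : β ≠ 0 := by
    intro h
    rw [h, zero_mul] at hkey
    exact HahnSeries.single_ne_zero one_ne_zero hkey.symm
  have hAαne : (2*A+β) ≠ 0 := by
    rw [h2Aβ]
    intro h
    rw [h] at hAα
    simp [HahnSeries.order_zero] at hAα
    omega
  have hordβ : β.order = (d:ℤ) - l := by
    have h := HahnSeries.order_mul hβne hAαne
    rw [hkey, HahnSeries.order_single one_ne_zero, h2Aβ, hAα] at h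
    omega
  have hβcoeff : ∀ m : ℤ, m < (d:ℤ) - l → β.coeff m = 0 := fun m hm =>
    HahnSeries.coeff_eq_zero_of_lt_order (by omega)
  -- the basic splits
  have hApos : ∀ n : ℤ, 0 < n → A.coeff n = 0 := by
    intro n hn; rw [hA, HahnSeries.coeff_single, if_neg (by omega)]
  have hβnonpos : ∀ n : ℤ, n ≤ 0 → β.coeff n = 0 := fun n hn => hβcoeff n (by omega)
  have hppα : polyPart α = A := by rw [hαA]; exact polyPart_split hApos hβnonpos
  have hfpα : fracPart α = β := by rw [hαA]; exact fracPart_split hApos hβnonpos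
  -- B1 and B2
  set B2 : QLaurent := 2*A + β with hB2
  set B1 : QLaurent := HahnSeries.single (l:ℤ) 1 * B2 with hB1
  set γ : QLaurent := HahnSeries.single (l:ℤ) 1 * β with hγ
  have hsls : HahnSeries.single (-(l:ℤ)) (1:ℚ) * HahnSeries.single (l:ℤ) 1 = 1 := by
    rw [HahnSeries.single_mul_single, show -(l:ℤ) + l = 0 by ring, mul_one]
    exact HahnSeries.single_zero_one
  have hβB1 : β * B1 = 1 := by
    rw [hB1, show β * (HahnSeries.single (l:ℤ) 1 * B2)
        = (β * B2) * HahnSeries.single (l:ℤ) 1 by ring, hkey, hsls]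
  have hγB2 : γ * B2 = 1 := by
    rw [hγ, mul_assoc, hkey, HahnSeries.single_mul_single,
      show (l:ℤ) + -(l:ℤ) = 0 by ring, mul_one]
    exact HahnSeries.single_zero_one
  have hβinv : β⁻¹ = B1 := inv_eq_of_mul_eq_one_right hβB1
  have hγinv : γ⁻¹ = B2 := inv_eq_of_mul_eq_one_right hγB2
  -- decomposition of B1
  have hB1dec : B1 = HahnSeries.single ((l:ℤ)-d) 2 + γ := by
    rw [hB1, hB2, hγ, mul_add, mul_comm (2:QLaurent) A, ← mul_assoc, hA,
      HahnSeries.single_mul_single, two_eq_single, HahnSeries.single_mul_single,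
      show (l:ℤ) + -(d:ℤ) + 0 = (l:ℤ) - d by ring]
    norm_num
  have hγcoeff : ∀ n : ℤ, n ≤ 0 → γ.coeff n = 0 := by
    intro n hn
    rw [hγ, show n = (n - l) + (l:ℤ) by ring, HahnSeries.coeff_single_mul_add,
      hβcoeff (n - l) (by omega), mul_zero]
  have hS1pos : ∀ n : ℤ, 0 < n → (HahnSeries.single ((l:ℤ)-d) (2:ℚ)).coeff n = 0 := by
    intro n hn; rw [HahnSeries.coeff_single, if_neg (by omega)]
  have hppB1 : polyPart B1 = HahnSeries.single ((l:ℤ)-d) 2 := by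
    rw [hB1dec]; exact polyPart_split hS1pos hγcoeff
  have hfpB1 : fracPart B1 = γ := by rw [hB1dec]; exact fracPart_split hS1pos hγcoeff
  -- decomposition of B2
  have hB2dec : B2 = HahnSeries.single (-(d:ℤ)) 2 + β := by
    rw [hB2, hA, two_eq_single, HahnSeries.single_mul_single,
      show (0:ℤ) + -(d:ℤ) = -(d:ℤ) by ring]
    norm_num
  have hS2pos : ∀ n : ℤ, 0 < n → (HahnSeries.single (-(d:ℤ)) (2:ℚ)).coeff n = 0 := by
    intro n hn; rw [HahnSeries.coeff_single, if_neg (by omega)]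
  have hppB2 : polyPart B2 = HahnSeries.single (-(d:ℤ)) 2 := by
    rw [hB2dec]; exact polyPart_split hS2pos hβnonpos
  have hfpB2 : fracPart B2 = β := by rw [hB2dec]; exact fracPart_split hS2pos hβnonpos
  -- periodicity
  have hcf : ∀ n : ℕ, cfA α (2*n+1) = B1 ∧ cfA α (2*n+2) = B2 := by
    intro n
    induction n with
    | zero =>
      have h1 : cfA α 1 = B1 := by
        rw [cfA_succ, show cfA α 0 = α from rfl, hfpα, hβinv]
      refine ⟨h1, ?_⟩
      rw [show 2*0+2 = 1+1 from rfl, cfA_succ, h1, hfpB1, hγinv]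
    | succ m ih =>
      have e1 : 2*(m+1)+1 = (2*m+2)+1 := by ring
      have e2 : 2*(m+1)+2 = (2*(m+1)+1)+1 := by ring
      have h1 : cfA α (2*(m+1)+1) = B1 := by
        rw [e1, cfA_succ, ih.2, hfpB2, hβinv]
      refine ⟨h1, ?_⟩
      rw [e2, cfA_succ, h1, hfpB1, hγinv]
  -- pq values
  have hpq0 : pq α 0 = A := hppα
  have hpq1 : ∀ n : ℕ, pq α (2*n+1) = HahnSeries.single ((l:ℤ)-d) 2 := by
    intro n; rw [pq, (hcf n).1, hppB1]
  have hpq2 : ∀ n : ℕ, pq α (2*n+2) = HahnSeries.single (-(d:ℤ)) 2 := by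
    intro n; rw [pq, (hcf n).2, hppB2]
  have cast_sub : ((d - l : ℕ) : ℤ) = (d:ℤ) - l := by omega
  refine ⟨?_, ?_, ?_, ?_⟩
  · rw [hpq0, hA, polyToL_X_pow]
  · intro n
    refine ⟨?_, ?_⟩
    · rw [hpq1 n, polyToL_two_X_pow, show -((d-l:ℕ):ℤ) = (l:ℤ) - d by omega]
    · rw [hpq2 n, polyToL_two_X_pow]
  · intro h
    rcases Nat.even_or_odd h with he | ho
    · rw [if_pos he]
      rcases Nat.eq_zero_or_pos h with rfl | hpos
      · rw [hpq0, hA, degZ_single one_ne_zero]; ring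
      · obtain ⟨k, hk⟩ := he
        have hk' : h = 2*(k-1)+2 := by omega
        rw [hk', hpq2, degZ_single two_ne_zero]; ring
    · rw [if_neg (Nat.not_even_iff_odd.mpr ho)]
      obtain ⟨k, hk⟩ := ho
      rw [hk, hpq1, degZ_single two_ne_zero]; ring
  · have hdeg : ∀ h : ℕ, degZ (pq α h) ≤ (d:ℤ) := by
      intro h
      rcases Nat.even_or_odd h with he | ho
      · rcases Nat.eq_zero_or_pos h with rfl | hpos
        · rw [hpq0, hA, degZ_single one_ne_zero]; omega
        · obtain ⟨k, hk⟩ := he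
          have hk' : h = 2*(k-1)+2 := by omega
          rw [hk', hpq2, degZ_single two_ne_zero]; omega
      · obtain ⟨k, hk⟩ := ho
        rw [hk, hpq1, degZ_single two_ne_zero]; omega
    have hfreq : ∃ᶠ h : ℕ in Filter.atTop, (d:ℤ) ≤ degZ (pq α h) := by
      rw [Filter.frequently_atTop]
      intro a
      refine ⟨2*a+2, by omega, ?_⟩
      rw [hpq2 a, degZ_single two_ne_zero]
      omega
    apply le_antisymm
    · exact Filter.limsup_le_of_le (Filter.IsCoboundedUnder.of_frequently_ge hfreq)
        (Filter.Eventually.of_forall hdeg)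
    · exact Filter.le_limsup_of_frequently_le hfreq (Filter.isBoundedUnder_of ⟨(d:ℤ), hdeg⟩)

end
end
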